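/- arXiv:1109.3847 — 3 statements merged into one kernel-verified Lean document; each statement's English description precedes it below -/
import Mathlib

section
/- If in a Steiner triple system of order v there exists a nonincident set of s points and s blocks, then s ≤ (2v + 5 - √(24v + 25))/2. -/
def IsSTS {α : Type*} [DecidableEq α] (v : ℕ) (X : Finset α) (B : Finset (Finset α)) : Prop :=
  X.card = v ∧ (∀ b ∈ B, b ⊆ X ∧ b.card = 3) ∧
    ∀ p ∈ X, ∀ q ∈ X, p ≠ q → ∃! b, b ∈ B ∧ p ∈ b ∧ q ∈ b

theorem stmt5 {α : Type*} [DecidableEq α] (v s : ℕ) (X : Finset α) (B : Finset (Finset α))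
    (hSTS : IsSTS v X B) (Y : Finset α) (hY : Y ⊆ X) (hs : Y.card = s)
    (D : Finset (Finset α)) (hD : D ⊆ B) (ht : D.card = s)
    (hNonInc : ∀ y ∈ Y, ∀ b ∈ D, y ∉ b) :
    (s : ℝ) ≤ (2 * v + 5 - Real.sqrt (24 * v + 25)) / 2 := by
  obtain ⟨hX, hB, huniq⟩ := hSTS
  have hsv : s ≤ v := by rw [← hs, ← hX]; exact Finset.card_le_card hY
  -- every block of D is contained in X \ Y
  have hbsub : ∀ b ∈ D, b ⊆ X \ Y := by
    intro b hb x hx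
    exact Finset.mem_sdiff.mpr ⟨(hB b (hD hb)).1 hx, fun hxY => hNonInc x hxY b hb hx⟩
  have hXY : (X \ Y).card = v - s := by
    rw [Finset.card_sdiff_of_subset hY, hs, hX]
  -- the 2-subsets of distinct blocks of D are disjoint
  have hdisj : (D : Set (Finset α)).PairwiseDisjoint (Finset.powersetCard 2) := by
    intro b hb c hc hne
    simp only [Finset.disjoint_left]
    intro p hp hp'
    rw [Finset.mem_powersetCard] at hp hp'
    obtain ⟨x, y, hxy, rfl⟩ := Finset.card_eq_two.mp hp.2
    have hxb : x ∈ b := hp.1 (by simp)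
    have hyb : y ∈ b := hp.1 (by simp)
    have hxc : x ∈ c := hp'.1 (by simp)
    have hyc : y ∈ c := hp'.1 (by simp)
    have hxX : x ∈ X := (hB b (hD hb)).1 hxb
    have hyX : y ∈ X := (hB b (hD hb)).1 hyb
    obtain ⟨w, -, hw⟩ := huniq x hxX y hyX hxy
    exact hne ((hw b ⟨hD hb, hxb, hyb⟩).trans (hw c ⟨hD hc, hxc, hyc⟩).symm)
  have hunion : D.biUnion (Finset.powersetCard 2) ⊆ (X \ Y).powersetCard 2 := by
    intro p hp
    obtain ⟨b, hb, hpb⟩ := Finset.mem_biUnion.mp hp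
    rw [Finset.mem_powersetCard] at hpb ⊢
    exact ⟨hpb.1.trans (hbsub b hb), hpb.2⟩
  have key : 3 * s ≤ (v - s).choose 2 := by
    have h1 : (D.biUnion (Finset.powersetCard 2)).card = 3 * s := by
      rw [Finset.card_biUnion hdisj]
      have hc3 : ∀ b ∈ D, (Finset.powersetCard 2 b).card = 3 := by
        intro b hb
        rw [Finset.card_powersetCard, (hB b (hD hb)).2]; rfl
      rw [Finset.sum_congr rfl hc3, Finset.sum_const, ht, smul_eq_mul, mul_comm]
    calc 3 * s = (D.biUnion (Finset.powersetCard 2)).card := h1.symm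
      _ ≤ ((X \ Y).powersetCard 2).card := Finset.card_le_card hunion
      _ = (v - s).choose 2 := by rw [Finset.card_powersetCard, hXY]
  -- arithmetic: 6s + u ≤ u^2 where u = v - s
  set u := v - s with hu
  have key2 : 6 * s + u ≤ u * u := by
    have h2 : 2 * u.choose 2 = u * (u - 1) := by
      cases u with
      | zero => rfl
      | succ n =>
        rw [Nat.choose_two_right, Nat.succ_sub_one]
        have he : 2 ∣ (n + 1) * n := by
          rw [mul_comm]; exact (Nat.even_mul_succ_self n).two_dvd
        exact Nat.mul_div_cancel' he
    have h3 : u * (u - 1) + u = u * u := by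
      cases u with
      | zero => rfl
      | succ n => rw [Nat.succ_sub_one]; ring
    have h4 := Nat.mul_le_mul_left 2 key
    calc 6 * s + u = 2 * (3 * s) + u := by ring
      _ ≤ 2 * u.choose 2 + u := Nat.add_le_add_right h4 u
      _ = u * (u - 1) + u := by rw [h2]
      _ = u * u := h3
  -- real analysis
  have hcast : (u : ℝ) = (v : ℝ) - s := by
    rw [hu]; exact Nat.cast_sub hsv
  have hr : 6 * (s : ℝ) + u ≤ u * u := by exact_mod_cast key2
  have hsq : (24 * v + 25 : ℝ) ≤ (2 * u + 5) ^ 2 := by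
    nlinarith [hr, hcast]
  have hsqrt : Real.sqrt (24 * v + 25) ≤ 2 * (u : ℝ) + 5 := by
    have h5 : Real.sqrt (24 * v + 25) ≤ Real.sqrt ((2 * (u : ℝ) + 5) ^ 2) :=
      Real.sqrt_le_sqrt hsq
    rwa [Real.sqrt_sq (by positivity)] at h5
  linarith
end

section
/- Let (X, B) be a Steiner triple system of order v and Y ⊆ X with |Y| = s. If the number of blocks disjoint from Y equals (v(v-1) + s² - s(2v-1))/6, then every block of B meets Y in 0, 2, or 3 points; equivalently, no block contains two points of X \ Y, so (X \ Y, B'_Y) is a Steiner triple system of order v - s, where B'_Y is the set of blocks disjoint from Y. -/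
lemma six_eq_aux (N n : ℕ) (h : (N : ℤ) * 6 = (n : ℤ) * ((n : ℤ) - 1)) :
    6 * N = n * (n - 1) := by
  cases n with
  | zero =>
    simp only [Nat.cast_zero, zero_sub, zero_mul, Nat.zero_sub, mul_zero] at h ⊢
    omega
  | succ m =>
    have h2 : (N : ℤ) * 6 = ((m + 1) * m : ℕ) := by push_cast; push_cast at h; linarith
    have h3 : N * 6 = (m + 1) * m := by exact_mod_cast h2
    rw [Nat.succ_sub_one]
    linarith

lemma two_mul_choose_two (n : ℕ) : 2 * n.choose 2 = n * (n - 1) := by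
  induction n with
  | zero => rfl
  | succ m ih =>
    rw [Nat.choose_succ_succ, Nat.choose_one_right, Nat.mul_add, ih, Nat.succ_sub_one]
    cases m with
    | zero => rfl
    | succ k => rw [Nat.succ_sub_one]; ring

theorem stmt7 {α : Type*} [DecidableEq α] (v s : ℕ) (X : Finset α) (B : Finset (Finset α))
    (hSTS : IsSTS v X B) (Y : Finset α) (hY : Y ⊆ X) (hs : Y.card = s)
    (heq : ((B.filter (fun b => b ∩ Y = ∅)).card : ℤ) * 6 =
      v * (v - 1) + s ^ 2 - s * (2 * v - 1)) :
    (∀ b ∈ B, (b ∩ Y).card = 0 ∨ (b ∩ Y).card = 2 ∨ (b ∩ Y).card = 3) ∧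
      (∀ b ∈ B, ¬ 2 ≤ (b ∩ (X \ Y)).card ∨ b ∩ Y = ∅) ∧
      IsSTS (v - s) (X \ Y) (B.filter (fun b => b ∩ Y = ∅)) := by
  obtain ⟨hXv, hB3, huniq⟩ := hSTS
  have hsv : s ≤ v := by rw [← hXv, ← hs]; exact Finset.card_le_card hY
  set Z := X \ Y with hZdef
  have hn : Z.card = v - s := by rw [hZdef, Finset.card_sdiff_of_subset hY, hXv, hs]
  set n := v - s with hndef
  -- for each block, |b ∩ Z| + |b ∩ Y| = 3
  have hk : ∀ b ∈ B, (b ∩ Z).card + (b ∩ Y).card = 3 := by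
    intro b hb
    have hbX := (hB3 b hb).1
    have hbz : b ∩ Z = b \ Y := by
      ext x
      simp only [hZdef, Finset.mem_inter, Finset.mem_sdiff]
      exact ⟨fun ⟨h1, _, h3⟩ => ⟨h1, h3⟩, fun ⟨h1, h3⟩ => ⟨h1, hbX h1, h3⟩⟩
    rw [hbz, Finset.card_sdiff_add_card_inter, (hB3 b hb).2]
  set T := Z.powersetCard 2 with hTdef
  -- double counting
  have hcount : ∑ b ∈ B, ((b ∩ Z).card.choose 2) = n.choose 2 := by
    have h1 : ∀ b ∈ B, ((b ∩ Z).card.choose 2) = (T.filter (· ⊆ b)).card := by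
      intro b hb
      have he : T.filter (· ⊆ b) = (b ∩ Z).powersetCard 2 := by
        ext e
        simp only [hTdef, Finset.mem_filter, Finset.mem_powersetCard,
          Finset.subset_inter_iff]
        tauto
      rw [he, Finset.card_powersetCard]
    rw [Finset.sum_congr rfl h1]
    have h2 : ∑ b ∈ B, (T.filter (· ⊆ b)).card = ∑ e ∈ T, (B.filter (fun b => e ⊆ b)).card := by
      simp only [Finset.card_filter]
      rw [Finset.sum_comm]
    rw [h2]
    have h3 : ∀ e ∈ T, (B.filter (fun b => e ⊆ b)).card = 1 := by
      intro e he
      rw [hTdef, Finset.mem_powersetCard] at he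
      obtain ⟨heZ, he2⟩ := he
      obtain ⟨p, q, hpq, rfl⟩ := Finset.card_eq_two.mp he2
      have hpX : p ∈ X := Finset.sdiff_subset (heZ (by simp))
      have hqX : q ∈ X := Finset.sdiff_subset (heZ (by simp))
      obtain ⟨b, hb, hbu⟩ := huniq p hpX q hqX hpq
      rw [Finset.card_eq_one]
      refine ⟨b, ?_⟩
      ext c
      simp only [Finset.mem_filter, Finset.mem_singleton, Finset.insert_subset_iff,
        Finset.singleton_subset_iff]
      constructor
      · rintro ⟨hc, hpc, hqc⟩; exact hbu c ⟨hc, hpc, hqc⟩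
      · rintro rfl; exact ⟨hb.1, hb.2.1, hb.2.2⟩
    rw [Finset.sum_congr rfl h3, Finset.sum_const, smul_eq_mul, mul_one, hTdef,
      Finset.card_powersetCard, hn]
  set N := (B.filter (fun b => b ∩ Y = ∅)).card with hNdef
  set M := (B.filter (fun b => (b ∩ Y).card = 1)).card with hMdef
  -- split the sum
  have hsplit : 3 * N + M = n.choose 2 := by
    rw [← hcount, ← Finset.sum_filter_add_sum_filter_not B (fun b => b ∩ Y = ∅)]
    congr 1
    · have h0 : ∀ b ∈ B.filter (fun b => b ∩ Y = ∅), ((b ∩ Z).card.choose 2) = 3 := by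
        intro b hb
        simp only [Finset.mem_filter] at hb
        have h3 := hk b hb.1
        have hy0 : (b ∩ Y).card = 0 := by rw [hb.2]; rfl
        have hz3 : (b ∩ Z).card = 3 := by omega
        rw [hz3]; rfl
      rw [Finset.sum_congr rfl h0, Finset.sum_const, smul_eq_mul, mul_comm]
    · have h1 : ∀ b ∈ B.filter (fun b => ¬ b ∩ Y = ∅),
          ((b ∩ Z).card.choose 2) = if (b ∩ Y).card = 1 then 1 else 0 := by
        intro b hb
        simp only [Finset.mem_filter] at hb
        have h3 := hk b hb.1
        have hk1 : 1 ≤ (b ∩ Y).card :=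
          Finset.card_pos.mpr (Finset.nonempty_iff_ne_empty.mpr hb.2)
        have : (b ∩ Y).card = 1 ∨ (b ∩ Y).card = 2 ∨ (b ∩ Y).card = 3 := by omega
        rcases this with h | h | h
        · have hz : (b ∩ Z).card = 2 := by omega
          rw [hz, if_pos h]; rfl
        · have hz : (b ∩ Z).card = 1 := by omega
          rw [hz, if_neg (by omega)]; rfl
        · have hz : (b ∩ Z).card = 0 := by omega
          rw [hz, if_neg (by omega)]; rfl
      rw [Finset.sum_congr rfl h1, ← Finset.card_filter, Finset.filter_filter, hMdef]
      congr 1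
      ext b
      simp only [Finset.mem_filter, and_assoc]
      constructor
      · rintro ⟨hb, h⟩
        refine ⟨hb, fun he => ?_, h⟩
        rw [he] at h
        simp at h
      · rintro ⟨hb, _, h⟩; exact ⟨hb, h⟩
  -- the hypothesis gives 6N = n(n-1)
  have h6 : 6 * N = n * (n - 1) := by
    have hcast : ((n : ℤ)) = (v : ℤ) - (s : ℤ) := by
      rw [hndef]; push_cast [hsv]; ring
    have key : (N : ℤ) * 6 = (n : ℤ) * ((n : ℤ) - 1) := by
      rw [hNdef, heq, hcast]; ring
    exact six_eq_aux N n key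
  have h2c := two_mul_choose_two n
  have hM0 : M = 0 := by omega
  -- no block meets Y in exactly one point
  have hne1 : ∀ b ∈ B, (b ∩ Y).card ≠ 1 := by
    intro b hb h1
    have : b ∈ B.filter (fun b => (b ∩ Y).card = 1) := Finset.mem_filter.mpr ⟨hb, h1⟩
    rw [Finset.card_eq_zero.mp hM0] at this
    simp at this
  have main1 : ∀ b ∈ B, (b ∩ Y).card = 0 ∨ (b ∩ Y).card = 2 ∨ (b ∩ Y).card = 3 := by
    intro b hb
    have h3 := hk b hb
    have := hne1 b hb
    omega
  refine ⟨main1, ?_, ?_, ?_, ?_⟩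
  · intro b hb
    by_cases h2 : 2 ≤ (b ∩ Z).card
    · right
      have h3 := hk b hb
      have := hne1 b hb
      exact Finset.card_eq_zero.mp (by omega)
    · left; exact h2
  · rw [← hn]
  · intro b hb
    rw [Finset.mem_filter] at hb
    have hbX := (hB3 b hb.1).1
    constructor
    · intro x hx
      rw [hZdef, Finset.mem_sdiff]
      refine ⟨hbX hx, fun hxY => ?_⟩
      have : x ∈ b ∩ Y := Finset.mem_inter.mpr ⟨hx, hxY⟩
      rw [hb.2] at this
      simp at this
    · exact (hB3 b hb.1).2
  · intro p hp q hq hpq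
    rw [hZdef, Finset.mem_sdiff] at hp hq
    obtain ⟨b, hb, hbu⟩ := huniq p hp.1 q hq.1 hpq
    have hbY : b ∩ Y = ∅ := by
      have hsub : b ∩ Y ⊆ (b.erase p).erase q := by
        intro x hx
        rw [Finset.mem_inter] at hx
        rw [Finset.mem_erase, Finset.mem_erase]
        refine ⟨fun h => hq.2 (h ▸ hx.2), fun h => hp.2 (h ▸ hx.2), hx.1⟩
      have hcard : ((b.erase p).erase q).card = 1 := by
        rw [Finset.card_erase_of_mem (Finset.mem_erase.mpr ⟨Ne.symm hpq, hb.2.2⟩),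
          Finset.card_erase_of_mem hb.2.1, (hB3 b hb.1).2]
      have hle : (b ∩ Y).card ≤ 1 := hcard ▸ Finset.card_le_card hsub
      have := hne1 b hb.1
      exact Finset.card_eq_zero.mp (by omega)
    refine ⟨b, ⟨Finset.mem_filter.mpr ⟨hb.1, hbY⟩, hb.2.1, hb.2.2⟩, ?_⟩
    rintro c ⟨hc, hpc, hqc⟩
    exact hbu c ⟨(Finset.mem_filter.mp hc).1, hpc, hqc⟩
end

section
/- Define f(v) as the maximum s such that some Steiner triple system of order v contains a nonincident set of s points and s blocks. Assuming the Doyen-Wilson theorem, f(v) = (2v + 5 - √(24v+25))/2 holds if and only if v ∈ {216z² + 42z + 1, 216z² + 186z + 39, 216z² + 138z + 21, 216z² + 282z + 91} for some nonnegative integer z. -/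
def HasNonincident (v s : ℕ) : Prop :=
  ∃ (X : Finset ℕ) (B : Finset (Finset ℕ)), IsSTS v X B ∧
    ∃ Y ⊆ X, ∃ D ⊆ B, Y.card = s ∧ D.card = s ∧ ∀ y ∈ Y, ∀ b ∈ D, y ∉ b

noncomputable def f (v : ℕ) : ℕ := sSup {s : ℕ | HasNonincident v s}

lemma block_unique {v : ℕ} {X : Finset ℕ} {B : Finset (Finset ℕ)} (h : IsSTS v X B)
    {b b' : Finset ℕ} (hb : b ∈ B) (hb' : b' ∈ B)
    {p q : ℕ} (hpq : p ≠ q) (hp : p ∈ b) (hq : q ∈ b) (hp' : p ∈ b') (hq' : q ∈ b') :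
    b = b' := by
  obtain ⟨hX, hbl, hpair⟩ := h
  obtain ⟨c, -, hun⟩ := hpair p ((hbl b hb).1 hp) q ((hbl b hb).1 hq) hpq
  rw [hun b ⟨hb, hp, hq⟩, hun b' ⟨hb', hp', hq'⟩]

lemma offDiag_biUnion_card {v : ℕ} {X : Finset ℕ} {B : Finset (Finset ℕ)} (h : IsSTS v X B)
    {D : Finset (Finset ℕ)} (hD : D ⊆ B) :
    (D.biUnion fun b => b.offDiag).card = 6 * D.card := by
  rw [Finset.card_biUnion]
  · rw [Finset.sum_congr rfl (fun b hb => ?_), Finset.sum_const, smul_eq_mul, mul_comm]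
    rw [Finset.offDiag_card, (h.2.1 b (hD hb)).2]
  · intro b hb b' hb' hne
    rw [Function.onFun, Finset.disjoint_left]
    intro pq hpq hpq'
    rw [Finset.mem_offDiag] at hpq hpq'
    exact hne (block_unique h (hD hb) (hD hb') hpq.2.2 hpq.1 hpq.2.1 hpq'.1 hpq'.2.1)

lemma sts_block_count {v : ℕ} {X : Finset ℕ} {B : Finset (Finset ℕ)} (h : IsSTS v X B) :
    6 * B.card = v * v - v := by
  have hsub : X.offDiag ⊆ B.biUnion fun b => b.offDiag := by
    intro pq hpq
    rw [Finset.mem_offDiag] at hpq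
    obtain ⟨b, ⟨hbB, hp, hq⟩, -⟩ := h.2.2 _ hpq.1 _ hpq.2.1 hpq.2.2
    exact Finset.mem_biUnion.2 ⟨b, hbB, Finset.mem_offDiag.2 ⟨hp, hq, hpq.2.2⟩⟩
  have hsup : (B.biUnion fun b => b.offDiag) ⊆ X.offDiag := by
    intro pq hpq
    rw [Finset.mem_biUnion] at hpq
    obtain ⟨b, hb, hpq⟩ := hpq
    rw [Finset.mem_offDiag] at hpq ⊢
    exact ⟨(h.2.1 b hb).1 hpq.1, (h.2.1 b hb).1 hpq.2.1, hpq.2.2⟩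
  have heq := Finset.Subset.antisymm hsub hsup
  calc 6 * B.card = (B.biUnion fun b => b.offDiag).card :=
        (offDiag_biUnion_card h Finset.Subset.rfl).symm
    _ = X.offDiag.card := by rw [← heq]
    _ = v * v - v := by rw [Finset.offDiag_card, h.1]

lemma sts_odd {v : ℕ} {X : Finset ℕ} {B : Finset (Finset ℕ)} (h : IsSTS v X B) (hv : 1 ≤ v) :
    v % 2 = 1 := by
  obtain ⟨p, hp⟩ := Finset.card_pos.1 (h.1 ▸ hv)
  have key : X.erase p = (B.filter (fun b => p ∈ b)).biUnion (fun b => b.erase p) := by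
    ext q
    simp only [Finset.mem_erase, Finset.mem_biUnion, Finset.mem_filter]
    constructor
    · rintro ⟨hqp, hqX⟩
      obtain ⟨b, ⟨hbB, hp', hq'⟩, -⟩ := h.2.2 p hp q hqX (Ne.symm hqp)
      exact ⟨b, ⟨hbB, hp'⟩, hqp, hq'⟩
    · rintro ⟨b, ⟨hbB, -⟩, hqp, hq⟩
      exact ⟨hqp, (h.2.1 b hbB).1 hq⟩
  have hcard : (X.erase p).card = 2 * (B.filter (fun b => p ∈ b)).card := by
    rw [key, Finset.card_biUnion]
    · rw [Finset.sum_congr rfl (fun b hb => ?_), Finset.sum_const, smul_eq_mul, mul_comm]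
      rw [Finset.mem_filter] at hb
      rw [Finset.card_erase_of_mem hb.2, (h.2.1 b hb.1).2]
    · intro b hb b' hb' hne
      rw [Finset.mem_coe, Finset.mem_filter] at hb hb'
      rw [Function.onFun, Finset.disjoint_left]
      intro q hq hq'
      rw [Finset.mem_erase] at hq hq'
      exact hne (block_unique h hb.1 hb'.1 (Ne.symm hq.1) hb.2 hq.2 hb'.2 hq'.2)
  rw [Finset.card_erase_of_mem hp, h.1] at hcard
  omega

lemma sts_adm {v : ℕ} {X : Finset ℕ} {B : Finset (Finset ℕ)} (h : IsSTS v X B) (hv : 1 ≤ v) :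
    v % 6 = 1 ∨ v % 6 = 3 := by
  have h2 := sts_odd h hv
  have h6 := sts_block_count h
  obtain ⟨M, hM⟩ : ∃ M, v * v = M := ⟨_, rfl⟩
  rw [hM] at h6
  have hvv : M % 6 = v % 6 := by
    have : v ≤ M := hM ▸ Nat.le_mul_of_pos_left v hv
    omega
  have hmod : (v % 6) * (v % 6) % 6 = v % 6 := by
    rw [← Nat.mul_mod, hM, hvv]
  have hr : v % 6 < 6 := Nat.mod_lt _ (by norm_num)
  have h2' : v % 6 % 2 = 1 := by omega
  generalize v % 6 = r at hmod h2' hr ⊢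
  interval_cases r <;> omega

lemma noninc_bound {v : ℕ} {X : Finset ℕ} {B : Finset (Finset ℕ)} (h : IsSTS v X B)
    {Y : Finset ℕ} {D : Finset (Finset ℕ)} (hY : Y ⊆ X) (hD : D ⊆ B)
    (hni : ∀ y ∈ Y, ∀ b ∈ D, y ∉ b) :
    (D.biUnion fun b => b.offDiag) ⊆ (X \ Y).offDiag := by
  intro pq hpq
  rw [Finset.mem_biUnion] at hpq
  obtain ⟨b, hb, hpq⟩ := hpq
  rw [Finset.mem_offDiag] at hpq ⊢
  have hbX := (h.2.1 b (hD hb)).1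
  exact ⟨Finset.mem_sdiff.2 ⟨hbX hpq.1, fun hy => hni _ hy b hb hpq.1⟩,
    Finset.mem_sdiff.2 ⟨hbX hpq.2.1, fun hy => hni _ hy b hb hpq.2.1⟩, hpq.2.2⟩

lemma noninc_card_bound {v : ℕ} {X : Finset ℕ} {B : Finset (Finset ℕ)} (h : IsSTS v X B)
    {Y : Finset ℕ} {D : Finset (Finset ℕ)} (hY : Y ⊆ X) (hD : D ⊆ B)
    (hni : ∀ y ∈ Y, ∀ b ∈ D, y ∉ b) :
    6 * D.card ≤ (v - Y.card) * (v - Y.card) - (v - Y.card) := by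
  have hc := Finset.card_le_card (noninc_bound h hY hD hni)
  rwa [offDiag_biUnion_card h hD, Finset.offDiag_card, Finset.card_sdiff_of_subset hY, h.1] at hc

lemma noninc_eq_sub {v : ℕ} {X : Finset ℕ} {B : Finset (Finset ℕ)} (h : IsSTS v X B)
    {Y : Finset ℕ} {D : Finset (Finset ℕ)} (hY : Y ⊆ X) (hD : D ⊆ B)
    (hni : ∀ y ∈ Y, ∀ b ∈ D, y ∉ b)
    (heq : 6 * D.card = (v - Y.card) * (v - Y.card) - (v - Y.card)) :
    IsSTS (v - Y.card) (X \ Y) D := by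
  have hcards : ((X \ Y).offDiag).card ≤ (D.biUnion fun b => b.offDiag).card := by
    rw [offDiag_biUnion_card h hD, Finset.offDiag_card, Finset.card_sdiff_of_subset hY, h.1, heq]
  have hset : (D.biUnion fun b => b.offDiag) = (X \ Y).offDiag :=
    Finset.eq_of_subset_of_card_le (noninc_bound h hY hD hni) hcards
  refine ⟨by rw [Finset.card_sdiff_of_subset hY, h.1], fun b hb => ⟨?_, (h.2.1 b (hD hb)).2⟩, ?_⟩
  · intro x hx
    exact Finset.mem_sdiff.2 ⟨(h.2.1 b (hD hb)).1 hx, fun hy => hni x hy b hb hx⟩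
  · intro p hp q hq hpq
    have hm : (p, q) ∈ (X \ Y).offDiag := Finset.mem_offDiag.2 ⟨hp, hq, hpq⟩
    rw [← hset, Finset.mem_biUnion] at hm
    obtain ⟨b, hb, hpq'⟩ := hm
    rw [Finset.mem_offDiag] at hpq'
    refine ⟨b, ⟨hb, hpq'.1, hpq'.2.1⟩, ?_⟩
    rintro b' ⟨hb', hp', hq'⟩
    exact block_unique h (hD hb') (hD hb) hpq hp' hq' hpq'.1 hpq'.2.1

lemma sts_one : IsSTS 1 ({0} : Finset ℕ) ∅ := by
  refine ⟨rfl, by simp, ?_⟩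
  intro p hp q hq hpq
  simp only [Finset.mem_singleton] at hp hq
  exact absurd (hp.trans hq.symm) hpq

lemma hni_bdd (v : ℕ) : BddAbove {s : ℕ | HasNonincident v s} := by
  refine ⟨v, fun s hs => ?_⟩
  obtain ⟨X, B, hsts, Y, hY, D, hD, hYc, hDc, hni⟩ := hs
  rw [← hYc, ← hsts.1]
  exact Finset.card_le_card hY

lemma arith_fwd (m v : ℕ) (h6 : m * m + 5 * m = 6 * v) (hm : m % 6 = 1 ∨ m % 6 = 3)
    (hv : v % 6 = 1 ∨ v % 6 = 3) :
    ∃ z : ℕ, v = 216 * z ^ 2 + 42 * z + 1 ∨ v = 216 * z ^ 2 + 186 * z + 39 ∨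
      v = 216 * z ^ 2 + 138 * z + 21 ∨ v = 216 * z ^ 2 + 282 * z + 91 := by
  rcases hm with hm | hm
  · obtain ⟨w, rfl⟩ : ∃ w, m = 6 * w + 1 := ⟨m / 6, by omega⟩
    have hv6 : v = 6 * (w * w) + 7 * w + 1 := by
      have h : 6 * (6 * (w * w) + 7 * w + 1) = 6 * v := by rw [← h6]; ring
      omega
    have hw : w % 6 = 0 ∨ w % 6 = 2 := by
      obtain ⟨W, hW⟩ : ∃ W, w * w = W := ⟨_, rfl⟩
      rw [hW] at hv6; omega
    rcases hw with hw | hw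
    · obtain ⟨z, rfl⟩ : ∃ z, w = 6 * z := ⟨w / 6, by omega⟩
      exact ⟨z, Or.inl (by rw [hv6]; ring)⟩
    · obtain ⟨z, rfl⟩ : ∃ z, w = 6 * z + 2 := ⟨w / 6, by omega⟩
      exact ⟨z, Or.inr (Or.inl (by rw [hv6]; ring))⟩
  · obtain ⟨w, rfl⟩ : ∃ w, m = 6 * w + 3 := ⟨m / 6, by omega⟩
    have hv6 : v = 6 * (w * w) + 11 * w + 4 := by
      have h : 6 * (6 * (w * w) + 11 * w + 4) = 6 * v := by rw [← h6]; ring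
      omega
    have hw : w % 6 = 1 ∨ w % 6 = 3 := by
      obtain ⟨W, hW⟩ : ∃ W, w * w = W := ⟨_, rfl⟩
      rw [hW] at hv6; omega
    rcases hw with hw | hw
    · obtain ⟨z, rfl⟩ : ∃ z, w = 6 * z + 1 := ⟨w / 6, by omega⟩
      exact ⟨z, Or.inr (Or.inr (Or.inl (by rw [hv6]; ring)))⟩
    · obtain ⟨z, rfl⟩ : ∃ z, w = 6 * z + 3 := ⟨w / 6, by omega⟩
      exact ⟨z, Or.inr (Or.inr (Or.inr (by rw [hv6]; ring)))⟩

lemma fwd (v : ℕ) (hv : v % 6 = 1 ∨ v % 6 = 3)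
    (hex : ∃ (X : Finset ℕ) (B : Finset (Finset ℕ)), IsSTS v X B)
    (hf : (f v : ℝ) = (2 * v + 5 - Real.sqrt (24 * v + 25)) / 2) :
    ∃ z : ℕ, v = 216 * z ^ 2 + 42 * z + 1 ∨ v = 216 * z ^ 2 + 186 * z + 39 ∨
      v = 216 * z ^ 2 + 138 * z + 21 ∨ v = 216 * z ^ 2 + 282 * z + 91 := by
  obtain ⟨X0, B0, h0⟩ := hex
  have h0mem : HasNonincident v 0 :=
    ⟨X0, B0, h0, ∅, Finset.empty_subset _, ∅, Finset.empty_subset _,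
      Finset.card_empty, Finset.card_empty, by simp⟩
  have hmem : HasNonincident v (f v) := Nat.sSup_mem ⟨0, by exact h0mem⟩ (hni_bdd v)
  set s := f v with hsdef
  obtain ⟨X, B, hsts, Y, hY, D, hD, hYc, hDc, hni⟩ := hmem
  have hsv : s ≤ v := by rw [← hYc, ← hsts.1]; exact Finset.card_le_card hY
  have hsqrt : Real.sqrt (24 * v + 25) = ((2 * v + 5 - 2 * s : ℕ) : ℝ) := by
    rw [Nat.cast_sub (show 2 * s ≤ 2 * v + 5 by omega)]
    push_cast
    linarith [hf]
  have hk2 : (2 * v + 5 - 2 * s) * (2 * v + 5 - 2 * s) = 24 * v + 25 := by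
    have h := Real.mul_self_sqrt (show (0 : ℝ) ≤ 24 * v + 25 by positivity)
    rw [hsqrt] at h
    exact_mod_cast h
  obtain ⟨k, hkdef⟩ : ∃ k, 2 * v + 5 - 2 * s = k := ⟨_, rfl⟩
  rw [hkdef] at hk2
  have hk5 : 5 ≤ k := by
    by_contra hlt
    push_neg at hlt
    have : k * k ≤ 4 * 4 := Nat.mul_le_mul (by omega) (by omega)
    omega
  have hkodd : k % 2 = 1 := by
    rcases Nat.even_or_odd k with ⟨t, ht⟩ | hodd
    · exfalso
      obtain ⟨T, hT⟩ : ∃ T, t * t = T := ⟨_, rfl⟩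
      have : 4 * T = 24 * v + 25 := by rw [← hk2, ht, ← hT]; ring
      omega
    · exact Nat.odd_iff.mp hodd
  obtain ⟨m, hmk⟩ : ∃ m, k = 2 * m + 5 := ⟨(k - 5) / 2, by omega⟩
  have h6v : m * m + 5 * m = 6 * v := by
    have hexp : (2 * m + 5) * (2 * m + 5) = 4 * (m * m) + 20 * m + 25 := by ring
    obtain ⟨M, hM⟩ : ∃ M, m * m = M := ⟨_, rfl⟩
    rw [hmk, hexp, hM] at hk2
    rw [hM]
    omega
  rw [hmk] at hkdef
  have hvs : v - s = m := by omega
  have h6s : 6 * s = m * m - m := by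
    obtain ⟨M, hM⟩ : ∃ M, m * m = M := ⟨_, rfl⟩
    rw [hM] at h6v ⊢
    omega
  have heq : 6 * D.card = (v - Y.card) * (v - Y.card) - (v - Y.card) := by
    rw [hDc, hYc, hvs]; exact h6s
  have hsub := noninc_eq_sub hsts hY hD hni heq
  rw [hYc, hvs] at hsub
  have hm1 : 1 ≤ m := by
    rcases Nat.eq_zero_or_pos m with rfl | h
    · exfalso; simp at h6v; omega
    · exact h
  exact arith_fwd m v h6v (sts_adm hsub hm1) hv

lemma bwd (v m : ℕ) (hv : v % 6 = 1 ∨ v % 6 = 3)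
    (hDW : ∀ a b : ℕ, (a % 6 = 1 ∨ a % 6 = 3) → (b % 6 = 1 ∨ b % 6 = 3) →
      a ≥ 2 * b + 1 →
      ∃ (X Z : Finset ℕ) (Bl D : Finset (Finset ℕ)),
        IsSTS a X Bl ∧ IsSTS b Z D ∧ Z ⊆ X ∧ D ⊆ Bl)
    (h6 : m * m + 5 * m = 6 * v) (hm6 : m % 6 = 1 ∨ m % 6 = 3) (hm19 : m = 1 ∨ 9 ≤ m) :
    (f v : ℝ) = (2 * v + 5 - Real.sqrt (24 * v + 25)) / 2 := by
  have h6' := h6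
  obtain ⟨M, hM⟩ : ∃ M, m * m = M := ⟨_, rfl⟩
  rw [hM] at h6
  have hMm : m ≤ M := by
    rw [← hM]
    exact Nat.le_mul_of_pos_left m (by omega)
  have hmv : m ≤ v := by omega
  have hmem : HasNonincident v (v - m) := by
    rcases hm19 with rfl | h9
    · have hv1 : v = 1 := by omega
      subst hv1
      exact ⟨{0}, ∅, sts_one, ∅, by simp, ∅, by simp, by simp, by simp, by simp⟩
    · have hge : v ≥ 2 * m + 1 := by
        have h9m : 9 * m ≤ M := by rw [← hM]; exact Nat.mul_le_mul_right m h9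
        omega
      obtain ⟨X, Z, Bl, D, hXB, hZD, hZX, hDBl⟩ := hDW v m hv hm6 hge
      refine ⟨X, Bl, hXB, X \ Z, Finset.sdiff_subset, D, hDBl, ?_, ?_, ?_⟩
      · rw [Finset.card_sdiff_of_subset hZX, hXB.1, hZD.1]
      · have hbc := sts_block_count hZD
        rw [hM] at hbc
        omega
      · intro y hy b hb hyb
        exact (Finset.mem_sdiff.1 hy).2 ((hZD.2.1 b hb).1 hyb)
  have hub : ∀ s ∈ {s : ℕ | HasNonincident v s}, s ≤ v - m := by
    intro s hs
    obtain ⟨X, B, hsts, Y, hY, D, hD, hYc, hDc, hni⟩ := hs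
    have hsv : s ≤ v := by rw [← hYc, ← hsts.1]; exact Finset.card_le_card hY
    have hbd := noninc_card_bound hsts hY hD hni
    rw [hDc, hYc] at hbd
    by_contra hgt
    push_neg at hgt
    obtain ⟨T, hT⟩ : ∃ T, (v - s) * (v - s) = T := ⟨_, rfl⟩
    obtain ⟨B2, hB2⟩ : ∃ B2, (m - 1) * (m - 1) = B2 := ⟨_, rfl⟩
    have ht1 : v - s ≤ m - 1 := by omega
    have hTB : T ≤ B2 := by rw [← hT, ← hB2]; exact Nat.mul_le_mul ht1 ht1
    have hq : B2 + 2 * m = M + 1 := by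
      rw [← hB2, ← hM]
      cases m with
      | zero => omega
      | succ n => simp only [Nat.succ_sub_one]; ring
    rw [hT] at hbd
    omega
  have hfv : f v = v - m := by
    refine le_antisymm ?_ (le_csSup (hni_bdd v) hmem)
    exact csSup_le ⟨_, hmem⟩ hub
  rw [hfv]
  have hc : (m : ℝ) * m + 5 * m = 6 * v := by exact_mod_cast h6'
  have hsq : (24 * (v : ℝ) + 25) = ((2 * m + 5 : ℕ) : ℝ) ^ 2 := by
    push_cast
    linear_combination (-4 : ℝ) * hc
  rw [hsq, Real.sqrt_sq (by positivity)]
  push_cast [Nat.cast_sub hmv]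
  ring

theorem stmt19 (v : ℕ) (hv : v % 6 = 1 ∨ v % 6 = 3)
    (hDW : ∀ a b : ℕ, (a % 6 = 1 ∨ a % 6 = 3) → (b % 6 = 1 ∨ b % 6 = 3) →
      a ≥ 2 * b + 1 →
      ∃ (X Z : Finset ℕ) (Bl D : Finset (Finset ℕ)),
        IsSTS a X Bl ∧ IsSTS b Z D ∧ Z ⊆ X ∧ D ⊆ Bl) :
    ((f v : ℝ) = (2 * v + 5 - Real.sqrt (24 * v + 25)) / 2) ↔
      ∃ z : ℕ, v = 216 * z ^ 2 + 42 * z + 1 ∨ v = 216 * z ^ 2 + 186 * z + 39 ∨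
        v = 216 * z ^ 2 + 138 * z + 21 ∨ v = 216 * z ^ 2 + 282 * z + 91 := by
  constructor
  · intro hf
    refine fwd v hv ?_ hf
    rcases eq_or_ne v 1 with rfl | hne
    · exact ⟨_, _, sts_one⟩
    · obtain ⟨X, Z, Bl, D, h1, -⟩ := hDW v 1 hv (Or.inl rfl) (by omega)
      exact ⟨X, Bl, h1⟩
  · rintro ⟨z, hz | hz | hz | hz⟩
    · refine bwd v (36 * z + 1) hv hDW (by subst hz; ring) (by omega) (by omega)
    · refine bwd v (36 * z + 13) hv hDW (by subst hz; ring) (by omega) (by omega)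
    · refine bwd v (36 * z + 9) hv hDW (by subst hz; ring) (by omega) (by omega)
    · refine bwd v (36 * z + 21) hv hDW (by subst hz; ring) (by omega) (by omega)
end
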